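/- arXiv:1611.04031 — 3 statements merged into one kernel-verified Lean document; each statement's English description precedes it below -/
import Mathlib

section
/- Let F be the finite field with 2^n elements. For every u, c ∈ F, the map χ_{u,c}(x,y) = (−1)^{Tr(ux) + Tr(c²y) + σ(c,x)} · i^{Tr(cx)} is multiplicative for the group operation (x₁,y₁) ⋆ (x₂,y₂) = (x₁+x₂, y₁+y₂+x₁x₂) on F × F; that is, χ_{u,c}((x₁,y₁)⋆(x₂,y₂)) = χ_{u,c}(x₁,y₁) · χ_{u,c}(x₂,y₂) for all x₁,x₂,y₁,y₂ ∈ F. -/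
open Finset

noncomputable section

noncomputable instance (n : ℕ) : Fintype (GaloisField 2 n) := Fintype.ofFinite _

/-- The absolute trace `Tr : F → F_2` for `F = GaloisField 2 n`. -/
def Tr (n : ℕ) (z : GaloisField 2 n) : ZMod 2 :=
  Algebra.trace (ZMod 2) (GaloisField 2 n) z

/-- `σ(c,x) = Σ_{0 ≤ i < j ≤ n−1} (cx)^{2^i} (cx)^{2^j} ∈ F`. -/
def sigma (n : ℕ) (c x : GaloisField 2 n) : GaloisField 2 n :=
  ∑ p ∈ (Finset.range n ×ˢ Finset.range n).filter (fun p => p.1 < p.2),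
    (c * x) ^ (2 ^ p.1) * (c * x) ^ (2 ^ p.2)

/-- Lift of an element of `{0,1} ⊆ F` to the integer `0` or `1`. -/
def lift01 {n : ℕ} (a : GaloisField 2 n) : ℕ :=
  letI := Classical.decEq (GaloisField 2 n)
  if a = 1 then 1 else 0

/-- The character `χ_{u,c}(x,y) = (−1)^{Tr(ux) + Tr(c²y) + σ(c,x)} · i^{Tr(cx)}`. -/
def chi (n : ℕ) (u c : GaloisField 2 n) (x y : GaloisField 2 n) : ℂ :=
  (-1 : ℂ) ^ ((Tr n (u * x)).val + (Tr n (c ^ 2 * y)).val + lift01 (sigma n c x)) *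
    Complex.I ^ (Tr n (c * x)).val

/-! ### Auxiliary material -/

namespace ChiAux

open Polynomial

variable {n : ℕ}

/-- `{0,1}`-indicator in `ZMod 2`. -/
def z2 {n : ℕ} (a : GaloisField 2 n) : ZMod 2 :=
  letI := Classical.decEq (GaloisField 2 n)
  if a = 1 then 1 else 0

lemma lift01_eq_z2_val (a : GaloisField 2 n) : lift01 a = (z2 a).val := by
  classical
  unfold lift01 z2
  split <;> rfl

lemma zmod2_cases (a : ZMod 2) : a = 0 ∨ a = 1 := by fin_cases a <;> simp <;> [exact Or.inl rfl; exact Or.inr rfl]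

lemma card_F (hn : n ≠ 0) : Fintype.card (GaloisField 2 n) = 2 ^ n := by
  rw [← Nat.card_eq_fintype_card, GaloisField.card 2 n hn]

lemma pow_card_F (hn : n ≠ 0) (a : GaloisField 2 n) : a ^ 2 ^ n = a := by
  rw [← card_F hn, FiniteField.pow_card]

/-- Frobenius as an algebra automorphism of `GaloisField 2 n`. -/
def frobAlg (n : ℕ) : GaloisField 2 n ≃ₐ[ZMod 2] GaloisField 2 n :=
  AlgEquiv.ofRingEquiv (f := frobeniusEquiv (GaloisField 2 n) 2)
    (fun r => by
      simp only [frobeniusEquiv_apply, frobenius_def]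
      rw [← map_pow, ZMod.pow_card r])

lemma frobAlg_apply (x : GaloisField 2 n) : frobAlg n x = x ^ 2 := rfl

lemma frobAlg_pow_apply (i : ℕ) (x : GaloisField 2 n) :
    ((frobAlg n) ^ i) x = x ^ 2 ^ i := by
  induction i generalizing x with
  | zero => simp
  | succ i ih =>
    rw [pow_succ, AlgEquiv.mul_apply, frobAlg_apply, ih, ← pow_mul]
    congr 1
    rw [pow_succ, Nat.mul_comm]

lemma pow_pow_eq_self (hn : n ≠ 0) {d : ℕ} (hd : d < n)
    (h : ∀ x : GaloisField 2 n, x ^ 2 ^ d = x) : d = 0 := by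
  by_contra hd0
  have hne : (X ^ 2 ^ d - X : (GaloisField 2 n)[X]) ≠ 0 :=
    FiniteField.X_pow_card_pow_sub_X_ne_zero _ hd0 one_lt_two
  apply hne
  apply Polynomial.eq_zero_of_natDegree_lt_card_of_eval_eq_zero _ Function.injective_id
  · intro x
    simp [h x]
  · rw [FiniteField.X_pow_card_pow_sub_X_natDegree_eq _ hd0 one_lt_two, card_F hn]
    exact Nat.pow_lt_pow_right one_lt_two hd

lemma frobAlg_pow_injOn (hn : n ≠ 0) :
    Function.Injective (fun i : Fin n => (frobAlg n) ^ (i : ℕ)) := by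
  have key : ∀ i j : Fin n, (i : ℕ) ≤ j →
      (frobAlg n) ^ (i : ℕ) = (frobAlg n) ^ (j : ℕ) → i = j := by
    intro i j hij h
    have hall : ∀ x : GaloisField 2 n, x ^ 2 ^ ((j : ℕ) - i) = x := by
      intro x
      have h1 : x ^ 2 ^ (i : ℕ) = x ^ 2 ^ (j : ℕ) := by
        rw [← frobAlg_pow_apply (n := n) i x, ← frobAlg_pow_apply (n := n) j x, h]
      have h2 : ((frobAlg n) ^ (i : ℕ)) (x ^ 2 ^ ((j : ℕ) - i)) =
          ((frobAlg n) ^ (i : ℕ)) x := by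
        rw [frobAlg_pow_apply, frobAlg_pow_apply, ← pow_mul, ← pow_add,
          Nat.sub_add_cancel hij, ← h1]
      exact (AlgEquiv.injective _) h2
    have hd : (j : ℕ) - i = 0 :=
      pow_pow_eq_self hn (lt_of_le_of_lt (Nat.sub_le _ _) j.isLt) hall
    exact Fin.ext (le_antisymm hij (Nat.sub_eq_zero_iff_le.mp hd))
  intro i j h
  rcases le_total (i : ℕ) (j : ℕ) with hij | hij
  · exact key i j hij h
  · exact (key j i hij h.symm).symm

lemma sum_automorphisms (hn : n ≠ 0) (x : GaloisField 2 n) :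
    ∑ σ : GaloisField 2 n ≃ₐ[ZMod 2] GaloisField 2 n, σ x =
      ∑ i ∈ range n, x ^ 2 ^ i := by
  have hcard : Fintype.card (GaloisField 2 n ≃ₐ[ZMod 2] GaloisField 2 n) = n := by
    rw [← Nat.card_eq_fintype_card, IsGalois.card_aut_eq_finrank, GaloisField.finrank 2 hn]
  have hbij : Function.Bijective (fun i : Fin n => (frobAlg n) ^ (i : ℕ)) := by
    rw [Fintype.bijective_iff_injective_and_card]
    exact ⟨frobAlg_pow_injOn hn, by simp [hcard]⟩
  rw [← Fintype.sum_bijective _ hbij _ (fun σ => σ x) (fun i => rfl)]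
  rw [← Fin.sum_univ_eq_sum_range (fun i => x ^ 2 ^ i)]
  exact Fintype.sum_congr _ _ (fun i => frobAlg_pow_apply _ _)

lemma algebraMap_Tr (hn : n ≠ 0) (x : GaloisField 2 n) :
    algebraMap (ZMod 2) (GaloisField 2 n) (Tr n x) = ∑ i ∈ range n, x ^ 2 ^ i := by
  rw [Tr, trace_eq_sum_automorphisms, sum_automorphisms hn]

/-! #### `sigma` is idempotent -/

lemma sigma_sq (hn : n ≠ 0) (c x : GaloisField 2 n) :
    sigma n c x ^ 2 = sigma n c x := by
  classical
  set a := c * x with ha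
  unfold sigma
  rw [sum_pow_char]
  apply Finset.sum_nbij' (i := fun p => if p.2 = n - 1 then (0, p.1 + 1) else (p.1 + 1, p.2 + 1))
    (j := fun p => if p.1 = 0 then (p.2 - 1, n - 1) else (p.1 - 1, p.2 - 1))
  · intro p hp
    simp only [Finset.mem_filter, Finset.mem_product, Finset.mem_range] at hp ⊢
    split <;> omega
  · intro p hp
    simp only [Finset.mem_filter, Finset.mem_product, Finset.mem_range] at hp ⊢
    split <;> omega
  · intro p hp
    obtain ⟨i, j⟩ := p
    simp only [Finset.mem_filter, Finset.mem_product, Finset.mem_range] at hp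
    by_cases h : j = n - 1
    · rw [if_pos h, if_pos rfl]
      simp only [Prod.mk.injEq]
      omega
    · rw [if_neg h, if_neg (by simp)]
      simp only [Prod.mk.injEq]
      omega
  · intro p hp
    obtain ⟨i, j⟩ := p
    simp only [Finset.mem_filter, Finset.mem_product, Finset.mem_range] at hp
    by_cases h : i = 0
    · rw [if_pos h, if_pos rfl]
      simp only [Prod.mk.injEq]
      omega
    · rw [if_neg h, if_neg (by simp <;> omega)]
      simp only [Prod.mk.injEq]
      omega
  · intro p hp
    simp only [Finset.mem_filter, Finset.mem_product, Finset.mem_range] at hp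
    obtain ⟨⟨h1, h2⟩, h3⟩ := hp
    rw [mul_pow, ← pow_mul, ← pow_mul, ← pow_succ, ← pow_succ]
    by_cases h : p.2 = n - 1
    · rw [if_pos h]
      have : p.2 + 1 = n := by omega
      rw [this, pow_card_F hn, pow_zero, pow_one, mul_comm]
    · rw [if_neg h]

lemma sigma_mem (c x : GaloisField 2 n) :
    sigma n c x = 0 ∨ sigma n c x = 1 := by
  rcases Nat.eq_zero_or_pos n with hn | hn
  · left
    subst hn
    simp [sigma]
  · have h := sigma_sq hn.ne' c x
    have : sigma n c x * (sigma n c x - 1) = 0 := by linear_combination h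
    rcases mul_eq_zero.mp this with h' | h'
    · exact Or.inl h'
    · exact Or.inr (by linear_combination h')

/-! #### `sigma` addition formula -/

lemma sigma_add (c x₁ x₂ : GaloisField 2 n) :
    sigma n c (x₁ + x₂) = sigma n c x₁ + sigma n c x₂ +
      (∑ i ∈ range n, (c * x₁) ^ 2 ^ i) * (∑ i ∈ range n, (c * x₂) ^ 2 ^ i) +
      ∑ i ∈ range n, (c * x₁ * (c * x₂)) ^ 2 ^ i := by
  classical
  set a := c * x₁ with ha
  set b := c * x₂ with hb
  have hab : c * (x₁ + x₂) = a + b := by rw [ha, hb]; ring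
  set P := (Finset.range n ×ˢ Finset.range n).filter (fun p : ℕ × ℕ => p.1 < p.2) with hP
  have expand : sigma n c (x₁ + x₂) =
      ∑ p ∈ P, (a ^ 2 ^ p.1 * a ^ 2 ^ p.2 + b ^ 2 ^ p.1 * b ^ 2 ^ p.2
        + (a ^ 2 ^ p.1 * b ^ 2 ^ p.2 + a ^ 2 ^ p.2 * b ^ 2 ^ p.1)) := by
    unfold sigma
    rw [hab]
    apply Finset.sum_congr rfl
    intro p hp
    rw [add_pow_char_pow, add_pow_char_pow]
    ring
  rw [expand, Finset.sum_add_distrib, Finset.sum_add_distrib, Finset.sum_add_distrib]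
  have hσ1 : ∑ p ∈ P, a ^ 2 ^ p.1 * a ^ 2 ^ p.2 = sigma n c x₁ := rfl
  have hσ2 : ∑ p ∈ P, b ^ 2 ^ p.1 * b ^ 2 ^ p.2 = sigma n c x₂ := rfl
  rw [hσ1, hσ2]
  have hfull : (∑ i ∈ range n, a ^ 2 ^ i) * (∑ i ∈ range n, b ^ 2 ^ i) =
      ∑ p ∈ range n ×ˢ range n, a ^ 2 ^ p.1 * b ^ 2 ^ p.2 := by
    rw [Finset.sum_mul_sum, Finset.sum_product]
  have hsplit1 : ∑ p ∈ range n ×ˢ range n, a ^ 2 ^ p.1 * b ^ 2 ^ p.2 =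
      (∑ p ∈ P, a ^ 2 ^ p.1 * b ^ 2 ^ p.2) +
      ∑ p ∈ (range n ×ˢ range n).filter (fun p : ℕ × ℕ => ¬ p.1 < p.2),
        a ^ 2 ^ p.1 * b ^ 2 ^ p.2 := by
    rw [hP, Finset.sum_filter_add_sum_filter_not]
  have hsplit2 : ∑ p ∈ (range n ×ˢ range n).filter (fun p : ℕ × ℕ => ¬ p.1 < p.2),
        a ^ 2 ^ p.1 * b ^ 2 ^ p.2 =
      (∑ p ∈ ((range n ×ˢ range n).filter (fun p : ℕ × ℕ => ¬ p.1 < p.2)).filter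
          (fun p : ℕ × ℕ => p.2 < p.1), a ^ 2 ^ p.1 * b ^ 2 ^ p.2) +
      ∑ p ∈ ((range n ×ˢ range n).filter (fun p : ℕ × ℕ => ¬ p.1 < p.2)).filter
          (fun p : ℕ × ℕ => ¬ p.2 < p.1), a ^ 2 ^ p.1 * b ^ 2 ^ p.2 := by
    rw [Finset.sum_filter_add_sum_filter_not]
  have hswap : ∑ p ∈ ((range n ×ˢ range n).filter (fun p : ℕ × ℕ => ¬ p.1 < p.2)).filter
          (fun p : ℕ × ℕ => p.2 < p.1), a ^ 2 ^ p.1 * b ^ 2 ^ p.2 =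
      ∑ p ∈ P, a ^ 2 ^ p.2 * b ^ 2 ^ p.1 := by
    apply Finset.sum_nbij' (i := Prod.swap) (j := Prod.swap)
    · intro p hp
      simp only [Finset.mem_filter, Finset.mem_product, Finset.mem_range, hP,
        Prod.fst_swap, Prod.snd_swap] at hp ⊢
      omega
    · intro p hp
      simp only [Finset.mem_filter, Finset.mem_product, Finset.mem_range, hP,
        Prod.fst_swap, Prod.snd_swap] at hp ⊢
      omega
    · intro p _; rfl
    · intro p _; rfl
    · intro p _; rfl
  have hdiag : ∑ p ∈ ((range n ×ˢ range n).filter (fun p : ℕ × ℕ => ¬ p.1 < p.2)).filter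
          (fun p : ℕ × ℕ => ¬ p.2 < p.1), a ^ 2 ^ p.1 * b ^ 2 ^ p.2 =
      ∑ i ∈ range n, (a * b) ^ 2 ^ i := by
    apply Finset.sum_nbij' (i := fun p => p.1) (j := fun i => (i, i))
    · intro p hp
      simp only [Finset.mem_filter, Finset.mem_product, Finset.mem_range] at hp ⊢
      exact hp.1.1.1
    · intro i hi
      simp only [Finset.mem_filter, Finset.mem_product, Finset.mem_range] at hi ⊢
      omega
    · intro p hp
      simp only [Finset.mem_filter, Finset.mem_product, Finset.mem_range] at hp
      ext <;> simp <;> omega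
    · intro i _; rfl
    · intro p hp
      simp only [Finset.mem_filter, Finset.mem_product, Finset.mem_range] at hp
      have : p.2 = p.1 := by omega
      rw [this, mul_pow a b]
  have goal2 : (∑ p ∈ P, a ^ 2 ^ p.1 * b ^ 2 ^ p.2) + ∑ p ∈ P, a ^ 2 ^ p.2 * b ^ 2 ^ p.1 =
      (∑ i ∈ range n, a ^ 2 ^ i) * (∑ i ∈ range n, b ^ 2 ^ i) +
        ∑ i ∈ range n, (a * b) ^ 2 ^ i := by
    rw [hfull, hsplit1, hsplit2, hswap, hdiag]
    have h2 : ∀ z : GaloisField 2 n, z + z = 0 := fun z => CharTwo.add_self_eq_zero z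
    linear_combination - h2 (∑ i ∈ range n, (a*b) ^ 2 ^ i)
  linear_combination goal2

/-! #### `z2` arithmetic -/

lemma z2_add_add (s t : GaloisField 2 n) (hs : s = 0 ∨ s = 1) (ht : t = 0 ∨ t = 1)
    (r : ZMod 2) :
    z2 (s + t + algebraMap (ZMod 2) (GaloisField 2 n) r) = z2 s + z2 t + r := by
  classical
  have h11 : (1 : GaloisField 2 n) + 1 = 0 := CharTwo.add_self_eq_zero 1
  rcases zmod2_cases r with rfl | rfl <;>
    rcases hs with rfl | rfl <;> rcases ht with rfl | rfl <;>
      simp [z2, map_zero, map_one, h11, zero_ne_one, one_ne_zero] <;> decide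

/-! #### The key `ZMod 2` identity for `sigma` -/

lemma surjective_algebraMap_zero :
    Function.Surjective (algebraMap (ZMod 2) (GaloisField 2 0)) := by
  have hsp : IsSplittingField (ZMod 2) (GaloisField 2 0) (X ^ 2 ^ 0 - X) := by
    exact inferInstanceAs (IsSplittingField (ZMod 2) (SplittingField (X ^ 2 ^ 0 - X : (ZMod 2)[X])) _)
  have h0 : (X ^ 2 ^ 0 - X : (ZMod 2)[X]) = 0 := by simp
  have hadj := hsp.adjoin_rootSet
  rw [h0, Polynomial.rootSet_zero, Algebra.adjoin_empty] at hadj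
  intro x
  have : x ∈ (⊥ : Subalgebra (ZMod 2) (GaloisField 2 0)) := hadj ▸ Algebra.mem_top
  rcases Algebra.mem_bot.mp this with ⟨r, hr⟩
  exact ⟨r, hr⟩

lemma Tr_zero_algebraMap (r : ZMod 2) :
    Tr 0 (algebraMap (ZMod 2) (GaloisField 2 0) r) = r := by
  have hbot : (⊥ : Subalgebra (ZMod 2) (GaloisField 2 0)) = ⊤ := by
    rw [eq_top_iff]
    intro x _
    rcases surjective_algebraMap_zero x with ⟨r, rfl⟩
    exact Subalgebra.algebraMap_mem _ r
  have hfr : Module.finrank (ZMod 2) (GaloisField 2 0) = 1 :=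
    Subalgebra.bot_eq_top_iff_finrank_eq_one.mp hbot
  rw [Tr, Algebra.trace_algebraMap, hfr, one_smul]

lemma key (c x₁ x₂ : GaloisField 2 n) :
    z2 (sigma n c (x₁ + x₂)) = z2 (sigma n c x₁) + z2 (sigma n c x₂) +
      Tr n (c * x₁) * Tr n (c * x₂) + Tr n (c ^ 2 * (x₁ * x₂)) := by
  rcases Nat.eq_zero_or_pos n with hn | hn
  · subst hn
    have hs : ∀ c x : GaloisField 2 0, sigma 0 c x = 0 := by
      intro c x; simp [sigma]
    rcases surjective_algebraMap_zero c with ⟨γ, rfl⟩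
    rcases surjective_algebraMap_zero x₁ with ⟨ξ₁, rfl⟩
    rcases surjective_algebraMap_zero x₂ with ⟨ξ₂, rfl⟩
    rw [hs, hs, hs]
    have h1 : (algebraMap (ZMod 2) (GaloisField 2 0)) γ * (algebraMap (ZMod 2) (GaloisField 2 0)) ξ₁
        = algebraMap (ZMod 2) (GaloisField 2 0) (γ * ξ₁) := (map_mul _ _ _).symm
    have h2 : (algebraMap (ZMod 2) (GaloisField 2 0)) γ * (algebraMap (ZMod 2) (GaloisField 2 0)) ξ₂
        = algebraMap (ZMod 2) (GaloisField 2 0) (γ * ξ₂) := (map_mul _ _ _).symm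
    have h3 : (algebraMap (ZMod 2) (GaloisField 2 0)) γ ^ 2 *
        ((algebraMap (ZMod 2) (GaloisField 2 0)) ξ₁ * (algebraMap (ZMod 2) (GaloisField 2 0)) ξ₂)
        = algebraMap (ZMod 2) (GaloisField 2 0) (γ ^ 2 * (ξ₁ * ξ₂)) := by
      rw [map_mul, map_mul, map_pow]
    rw [h1, h2, h3, Tr_zero_algebraMap, Tr_zero_algebraMap, Tr_zero_algebraMap]
    have hz : z2 (0 : GaloisField 2 0) = 0 := by
      classical
      simp [z2, zero_ne_one]
    rw [hz]
    rcases zmod2_cases γ with rfl | rfl <;> rcases zmod2_cases ξ₁ with rfl | rfl <;>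
      rcases zmod2_cases ξ₂ with rfl | rfl <;> decide
  · have hn' : n ≠ 0 := hn.ne'
    have hS := sigma_add c x₁ x₂
    rw [← algebraMap_Tr hn', ← algebraMap_Tr hn', ← algebraMap_Tr hn'] at hS
    have hprod : c * x₁ * (c * x₂) = c ^ 2 * (x₁ * x₂) := by ring
    rw [hprod, ← map_mul] at hS
    rw [add_assoc (sigma n c x₁ + sigma n c x₂), ← map_add] at hS
    rw [hS, z2_add_add _ _ (sigma_mem c x₁) (sigma_mem c x₂)]
    ring

/-! #### Complex sign bookkeeping -/

def m1 (a : ZMod 2) : ℂ := (-1 : ℂ) ^ a.val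

def mI (a : ZMod 2) : ℂ := Complex.I ^ a.val

lemma m1_add (a b : ZMod 2) : m1 (a + b) = m1 a * m1 b := by
  rcases zmod2_cases a with rfl | rfl <;> rcases zmod2_cases b with rfl | rfl <;>
    norm_num [m1, show ((1 : ZMod 2) + 1) = 0 from by decide,
      show ((0 : ZMod 2)).val = 0 from rfl, show ((1 : ZMod 2)).val = 1 from rfl,
      show ZMod.val (2 : ZMod 2) = 0 from by decide]

lemma mI_add (a b : ZMod 2) : mI (a + b) = mI a * mI b * m1 (a * b) := by
  rcases zmod2_cases a with rfl | rfl <;> rcases zmod2_cases b with rfl | rfl <;>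
    norm_num [mI, m1, show ((1 : ZMod 2) + 1) = 0 from by decide,
      show ((1 : ZMod 2) * 1) = 1 from by decide,
      show ((0 : ZMod 2)).val = 0 from rfl, show ((1 : ZMod 2)).val = 1 from rfl,
      show ZMod.val (2 : ZMod 2) = 0 from by decide, Complex.I_sq]

lemma m1_sq (a : ZMod 2) : m1 a * m1 a = 1 := by
  rcases zmod2_cases a with rfl | rfl <;>
    norm_num [m1, show ((0 : ZMod 2)).val = 0 from rfl, show ((1 : ZMod 2)).val = 1 from rfl,
      show ZMod.val (2 : ZMod 2) = 0 from by decide]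

lemma complex_key (A₁ A₂ B₁ B₂ M T₁ T₂ s₁ s₂ : ZMod 2) :
    (-1 : ℂ) ^ ((A₁ + A₂).val + (B₁ + B₂ + M).val + (s₁ + s₂ + T₁ * T₂ + M).val) *
      Complex.I ^ ((T₁ + T₂).val) =
    ((-1 : ℂ) ^ (A₁.val + B₁.val + s₁.val) * Complex.I ^ T₁.val) *
      ((-1 : ℂ) ^ (A₂.val + B₂.val + s₂.val) * Complex.I ^ T₂.val) := by
  have lhs : (-1 : ℂ) ^ ((A₁ + A₂).val + (B₁ + B₂ + M).val + (s₁ + s₂ + T₁ * T₂ + M).val) *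
      Complex.I ^ ((T₁ + T₂).val) =
      m1 (A₁ + A₂) * m1 (B₁ + B₂ + M) * m1 (s₁ + s₂ + T₁ * T₂ + M) * mI (T₁ + T₂) := by
    rw [m1, m1, m1, mI, ← pow_add, ← pow_add]
  have rhs : ((-1 : ℂ) ^ (A₁.val + B₁.val + s₁.val) * Complex.I ^ T₁.val) *
      ((-1 : ℂ) ^ (A₂.val + B₂.val + s₂.val) * Complex.I ^ T₂.val) =
      (m1 A₁ * m1 B₁ * m1 s₁ * mI T₁) * (m1 A₂ * m1 B₂ * m1 s₂ * mI T₂) := by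
    rw [m1, m1, m1, m1, m1, m1, mI, mI, ← pow_add, ← pow_add, ← pow_add, ← pow_add]
  rw [lhs, rhs, m1_add A₁ A₂, m1_add (B₁ + B₂) M, m1_add B₁ B₂,
    m1_add (s₁ + s₂ + T₁ * T₂) M, m1_add (s₁ + s₂) (T₁ * T₂), m1_add s₁ s₂,
    mI_add T₁ T₂]
  calc m1 A₁ * m1 A₂ * (m1 B₁ * m1 B₂ * m1 M) * (m1 s₁ * m1 s₂ * m1 (T₁ * T₂) * m1 M) *
        (mI T₁ * mI T₂ * m1 (T₁ * T₂))
      = (m1 M * m1 M) * (m1 (T₁ * T₂) * m1 (T₁ * T₂)) *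
        ((m1 A₁ * m1 B₁ * m1 s₁ * mI T₁) * (m1 A₂ * m1 B₂ * m1 s₂ * mI T₂)) := by ring
    _ = (m1 A₁ * m1 B₁ * m1 s₁ * mI T₁) * (m1 A₂ * m1 B₂ * m1 s₂ * mI T₂) := by
        rw [m1_sq, m1_sq, one_mul, one_mul]

end ChiAux

/-- `χ_{u,c}` is multiplicative for the group operation
`(x₁,y₁) ⋆ (x₂,y₂) = (x₁+x₂, y₁+y₂+x₁x₂)` on `F × F`. -/
theorem chi_multiplicative (n : ℕ) (u c : GaloisField 2 n)
    (x₁ x₂ y₁ y₂ : GaloisField 2 n) :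
    chi n u c (x₁ + x₂) (y₁ + y₂ + x₁ * x₂) = chi n u c x₁ y₁ * chi n u c x₂ y₂ := by
  have hadd : ∀ z w : GaloisField 2 n, Tr n (z + w) = Tr n z + Tr n w := fun z w =>
    map_add (Algebra.trace (ZMod 2) (GaloisField 2 n)) z w
  unfold chi
  rw [ChiAux.lift01_eq_z2_val, ChiAux.lift01_eq_z2_val, ChiAux.lift01_eq_z2_val]
  rw [show u * (x₁ + x₂) = u * x₁ + u * x₂ from by ring, hadd]
  rw [show c ^ 2 * (y₁ + y₂ + x₁ * x₂) = c ^ 2 * y₁ + c ^ 2 * y₂ + c ^ 2 * (x₁ * x₂) from by ring,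
    hadd, hadd]
  rw [show c * (x₁ + x₂) = c * x₁ + c * x₂ from by ring, hadd]
  rw [ChiAux.key c x₁ x₂]
  exact ChiAux.complex_key _ _ _ _ _ _ _ _ _
end
end

section
/- Let F be the finite field with 2^n elements. If u₁, c₁, u₂, c₂ ∈ F and the functions χ_{u₁,c₁} and χ_{u₂,c₂} given by χ_{u,c}(x,y) = (−1)^{Tr(ux) + Tr(c²y) + σ(c,x)} · i^{Tr(cx)} agree at every (x,y) ∈ F × F, then u₁ = u₂ and c₁ = c₂. -/
open Finset

noncomputable section

/-- Nondegeneracy of the trace form. -/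
lemma tr_nondeg (n : ℕ) (a : GaloisField 2 n)
    (h : ∀ x, Tr n (a * x) = 0) : a = 0 :=
  (traceForm_nondegenerate (ZMod 2) (GaloisField 2 n)).1 a h

lemma neg_one_pow_inj (a b : ZMod 2) (h : (-1 : ℂ) ^ a.val = (-1 : ℂ) ^ b.val) : a = b := by
  have ha : a.val < 2 := a.val_lt
  have hb : b.val < 2 := b.val_lt
  have : a.val = b.val := by
    interval_cases ha' : a.val <;> interval_cases hb' : b.val <;> simp_all <;> norm_num at h
  exact ZMod.val_injective 2 this

lemma sigma_zero (n : ℕ) (c : GaloisField 2 n) : sigma n c 0 = 0 := by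
  unfold sigma
  apply Finset.sum_eq_zero
  intro p _
  simp [zero_pow (Nat.two_pow_pos p.1).ne']

lemma lift01_zero (n : ℕ) : lift01 (0 : GaloisField 2 n) = 0 := by
  unfold lift01
  simp

lemma Tr_zero (n : ℕ) : Tr n 0 = 0 := by
  unfold Tr; simp

/-- Distinct parameters give distinct characters: if `χ_{u₁,c₁}` and `χ_{u₂,c₂}`
agree everywhere then `u₁ = u₂` and `c₁ = c₂`. -/
theorem chi_injective (n : ℕ) (u₁ c₁ u₂ c₂ : GaloisField 2 n)
    (h : ∀ x y : GaloisField 2 n, chi n u₁ c₁ x y = chi n u₂ c₂ x y) :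
    u₁ = u₂ ∧ c₁ = c₂ := by
  have hc : c₁ = c₂ := by
    have hsq : c₁ ^ 2 = c₂ ^ 2 := by
      have h2 : c₁ ^ 2 - c₂ ^ 2 = 0 := by
        apply tr_nondeg
        intro y
        have := h 0 y
        simp only [chi, mul_zero, sigma_zero, lift01_zero, Tr_zero, ZMod.val_zero,
          pow_zero, mul_one, zero_add, add_zero] at this
        have heq : Tr n (c₁ ^ 2 * y) = Tr n (c₂ ^ 2 * y) := neg_one_pow_inj _ _ this
        have : Tr n ((c₁ ^ 2 - c₂ ^ 2) * y) = Tr n (c₁ ^ 2 * y) - Tr n (c₂ ^ 2 * y) := by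
          unfold Tr
          rw [sub_mul, map_sub]
        rw [this, heq, sub_self]
      linear_combination h2
    have : (c₁ - c₂) ^ 2 = 0 := by
      have h2 : (2 : GaloisField 2 n) = 0 := by
        exact_mod_cast CharP.cast_eq_zero (GaloisField 2 n) 2
      linear_combination hsq + (c₂ ^ 2 - c₁ * c₂) * h2
    have := pow_eq_zero_iff (n := 2) (by norm_num) |>.mp this
    exact sub_eq_zero.mp this
  subst hc
  refine ⟨?_, rfl⟩
  have h2 : u₁ - u₂ = 0 := by
    apply tr_nondeg
    intro x
    have := h x 0
    simp only [chi, mul_zero, Tr_zero, ZMod.val_zero, add_zero] at this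
    have hI : (Complex.I ^ (Tr n (c₁ * x)).val) ≠ 0 := pow_ne_zero _ Complex.I_ne_zero
    have := mul_right_cancel₀ hI this
    rw [pow_add, pow_add] at this
    have hm : ((-1 : ℂ) ^ lift01 (sigma n c₁ x)) ≠ 0 := pow_ne_zero _ (by norm_num)
    have := mul_right_cancel₀ hm this
    have heq : Tr n (u₁ * x) = Tr n (u₂ * x) := neg_one_pow_inj _ _ this
    have hsub : Tr n ((u₁ - u₂) * x) = Tr n (u₁ * x) - Tr n (u₂ * x) := by
      unfold Tr
      rw [sub_mul, map_sub]
    rw [hsub, heq, sub_self]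
  exact sub_eq_zero.mp h2
end
end

section
/- Let F be the finite field with 2^n elements, g : F → F_2, and c ∈ F. For every u ∈ F, V_g^c(u) · conj(V_g^c(u)) = Σ_{z ∈ F} (−1)^{Tr(uz) + σ(c,z)} · i^{Tr(cz)} · ( Σ_{x ∈ F} (−1)^{g(x) + g(x+z) + Tr(c²xz)} ). -/
open Finset

noncomputable section

/-- The unitary transform
`V_g^c(u) = Σ_{x ∈ F} (−1)^{g(x) + σ(c,x) + Tr(ux)} · i^{Tr(cx)}`. -/
def V (n : ℕ) (g : GaloisField 2 n → ZMod 2) (c u : GaloisField 2 n) : ℂ :=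
  ∑ x : GaloisField 2 n,
    (-1 : ℂ) ^ ((g x).val + lift01 (sigma n c x) + (Tr n (u * x)).val) *
      Complex.I ^ (Tr n (c * x)).val

/-- `g : F → F_2` is `c`-bent₄ if `V_g^c` has a flat spectrum. -/
def IsCBent4 (n : ℕ) (g : GaloisField 2 n → ZMod 2) (c : GaloisField 2 n) : Prop :=
  ∀ u : GaloisField 2 n, ‖V n g c u‖ = (2 : ℝ) ^ ((n : ℝ) / 2)


lemma pow_q (n : ℕ) (a : GaloisField 2 n) : a ^ (2 ^ n) = a := by
  rcases Nat.eq_zero_or_pos n with rfl | hn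
  · simpa using pow_one a
  · have hcard : Fintype.card (GaloisField 2 n) = 2 ^ n := by
      rw [← Nat.card_eq_fintype_card, GaloisField.card 2 n hn.ne']
    rw [← hcard, FiniteField.pow_card]

def frob (n : ℕ) : (GaloisField 2 n) ≃ₐ[ZMod 2] (GaloisField 2 n) :=
  AlgEquiv.ofBijective
    (AlgHom.mk' (frobenius (GaloisField 2 n) 2) (fun r x => by
      simp [frobenius_def, mul_pow, ← map_pow, ZMod.pow_card, Algebra.smul_def]))
    ((Finite.injective_iff_bijective).mp (frobenius_inj _ 2))

lemma frob_pow_apply (n i : ℕ) : ∀ a : GaloisField 2 n, ((frob n) ^ i) a = a ^ (2 ^ i) := by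
  induction i with
  | zero => intro a; simp
  | succ i ih =>
    intro a
    rw [pow_succ, AlgEquiv.mul_apply]
    have : (frob n) a = a ^ 2 := rfl
    rw [this, ih (a ^ 2), ← pow_mul, pow_succ, mul_comm]

lemma frob_pow_injOn (n : ℕ) : Set.InjOn (fun i => (frob n) ^ i) (Finset.range n) := by
  have key : ∀ i j, i < j → j < n → ¬ ((frob n) ^ i = (frob n) ^ j) := by
    intro i j hij hj h
    obtain ⟨ζ, hζ⟩ := IsCyclic.exists_generator (α := (GaloisField 2 n)ˣ)
    have hord : orderOf ζ = Nat.card (GaloisField 2 n)ˣ :=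
      orderOf_eq_card_of_forall_mem_zpowers hζ
    have hcardu : Nat.card (GaloisField 2 n)ˣ = 2 ^ n - 1 := by
      rw [Nat.card_units, GaloisField.card 2 n (by omega)]
    have hz : (ζ : GaloisField 2 n) ^ (2 ^ i) = (ζ : GaloisField 2 n) ^ (2 ^ j) := by
      rw [← frob_pow_apply n i, ← frob_pow_apply n j, h]
    have hzu : ζ ^ (2 ^ i) = ζ ^ (2 ^ j) := Units.ext (by rw [Units.val_pow_eq_pow_val, Units.val_pow_eq_pow_val]; exact hz)
    rw [pow_eq_pow_iff_modEq, hord, hcardu] at hzu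
    have h1 : 2 ^ i < 2 ^ n - 1 := by
      have ha : 2 ^ i < 2 ^ (n-1) := Nat.pow_lt_pow_right one_lt_two (by omega)
      have hb : 2 ^ (n-1) < 2 ^ n - 1 := by
        have h2 : 2 ^ (n-1) * 2 = 2 ^ n := by
          rw [← pow_succ]; congr 1; omega
        have e1 : 2 ≤ 2 ^ (n-1) := by
          calc (2:ℕ) = 2^1 := rfl
          _ ≤ 2^(n-1) := Nat.pow_le_pow_right (by omega) (by omega)
        omega
      exact lt_trans ha hb
    have h2 : 2 ^ j < 2 ^ n - 1 := by
      have ha : 2 ^ j ≤ 2 ^ (n-1) := Nat.pow_le_pow_right (by omega) (by omega)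
      have hb : 2 ^ (n-1) < 2 ^ n - 1 := by
        have h2 : 2 ^ (n-1) * 2 = 2 ^ n := by
          rw [← pow_succ]; congr 1; omega
        have e1 : 2 ≤ 2 ^ (n-1) := by
          calc (2:ℕ) = 2^1 := rfl
          _ ≤ 2^(n-1) := Nat.pow_le_pow_right (by omega) (by omega)
        omega
      exact lt_of_le_of_lt ha hb
    have := hzu.eq_of_lt_of_lt h1 h2
    have := Nat.pow_right_injective (le_refl 2) this
    omega
  intro i hi j hj hija
  simp only [coe_range, Set.mem_Iio] at hi hj
  simp only at hija
  rcases lt_trichotomy i j with h | h | h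
  · exact absurd hija (key i j h hj)
  · exact h
  · exact absurd hija.symm (key j i h hi)

lemma trace_eq (n : ℕ) (hn : n ≠ 0) (a : GaloisField 2 n) :
    algebraMap (ZMod 2) (GaloisField 2 n) (Tr n a) = ∑ i ∈ Finset.range n, a ^ (2 ^ i) := by
  classical
  rw [Tr, trace_eq_sum_automorphisms]
  have himg : (Finset.range n).image (fun i => (frob n) ^ i) = Finset.univ := by
    apply Finset.eq_univ_of_card
    rw [Finset.card_image_of_injOn (frob_pow_injOn n), Finset.card_range,
      ← Nat.card_eq_fintype_card, IsGalois.card_aut_eq_finrank, GaloisField.finrank 2 hn]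
  rw [← himg, Finset.sum_image (fun i hi j hj h => frob_pow_injOn n (by simpa using hi) (by simpa using hj) h)]
  exact Finset.sum_congr rfl fun i _ => frob_pow_apply n i a

lemma sigma_mem (n : ℕ) (c x : GaloisField 2 n) : sigma n c x = 0 ∨ sigma n c x = 1 := by
  set a := c * x with ha
  have hsq : sigma n c x ^ 2 = sigma n c x := by
    rw [sigma, sum_pow_char]
    have e1 : ∀ p ∈ (Finset.range n ×ˢ Finset.range n).filter (fun p => p.1 < p.2),
        (a ^ (2 ^ p.1) * a ^ (2 ^ p.2)) ^ 2 = a ^ (2 ^ (p.1+1)) * a ^ (2 ^ (p.2+1)) := by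
      intro p _
      rw [mul_pow, ← pow_mul, ← pow_mul, ← pow_succ, ← pow_succ]
    rw [Finset.sum_congr rfl e1]
    set S := (Finset.range n ×ˢ Finset.range n).filter (fun p : ℕ × ℕ => p.1 < p.2) with hS
    have memS : ∀ p : ℕ × ℕ, p ∈ S ↔ p.1 < p.2 ∧ p.2 < n := by
      intro p
      simp only [hS, Finset.mem_filter, Finset.mem_product, Finset.mem_range]
      constructor
      · rintro ⟨⟨h1, h2⟩, h3⟩; exact ⟨h3, h2⟩
      · rintro ⟨h1, h2⟩; exact ⟨⟨by omega, h2⟩, h1⟩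
    refine Finset.sum_nbij'
      (i := fun p => if p.2 = n - 1 then (0, p.1 + 1) else (p.1 + 1, p.2 + 1))
      (j := fun q => if q.1 = 0 then (q.2 - 1, n - 1) else (q.1 - 1, q.2 - 1))
      ?_ ?_ ?_ ?_ ?_
    · intro p hp
      rw [memS] at hp ⊢
      split <;> constructor <;> simp <;> omega
    · intro q hq
      rw [memS] at hq ⊢
      split <;> constructor <;> simp <;> omega
    · intro p hp
      rcases p with ⟨p1, p2⟩
      rw [memS] at hp
      dsimp only
      split_ifs <;> ext <;> dsimp only at * <;> omega
    · intro q hq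
      rcases q with ⟨q1, q2⟩
      rw [memS] at hq
      dsimp only
      split_ifs <;> ext <;> dsimp only at * <;> omega
    · intro p hp
      rw [memS] at hp
      rcases Nat.decEq p.2 (n-1) with h | h
      · simp only [if_neg h, ha]
      · simp only [if_pos h]
        have hp2 : p.2 + 1 = n := by omega
        rw [hp2, pow_q n a, pow_zero, pow_one, mul_comm]
  have : sigma n c x * (sigma n c x - 1) = 0 := by ring_nf; linear_combination hsq
  rcases mul_eq_zero.mp this with h | h
  · exact Or.inl h
  · exact Or.inr (by linear_combination h)

def Tsum (n : ℕ) (a : GaloisField 2 n) : GaloisField 2 n := ∑ i ∈ Finset.range n, a ^ (2 ^ i)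

lemma sigma_add (n : ℕ) (c x z : GaloisField 2 n) :
    sigma n c (x + z) + sigma n c x + sigma n c z
      = Tsum n (c * x) * Tsum n (c * z) + Tsum n (c ^ 2 * x * z) := by
  have htwo : (2 : GaloisField 2 n) = 0 := by
    have := CharP.cast_eq_zero (GaloisField 2 n) 2
    exact_mod_cast this
  set a := c * x with ha
  set b := c * z with hb
  set S := (Finset.range n ×ˢ Finset.range n).filter (fun p : ℕ × ℕ => p.1 < p.2) with hS
  set S' := (Finset.range n ×ˢ Finset.range n).filter (fun p : ℕ × ℕ => p.2 < p.1) with hS'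
  set Sd := (Finset.range n ×ˢ Finset.range n).filter (fun p : ℕ × ℕ => p.1 = p.2) with hSd
  have hmul : c * (x + z) = a + b := by rw [ha, hb]; ring
  have hab : a * b = c ^ 2 * x * z := by rw [ha, hb]; ring
  -- expand sigma of the sum
  have hexp : sigma n c (x + z)
      = sigma n c x + sigma n c z
        + (∑ p ∈ S, (a ^ (2 ^ p.1) * b ^ (2 ^ p.2) + a ^ (2 ^ p.2) * b ^ (2 ^ p.1))) := by
    rw [sigma, hmul]
    have e1 : ∀ p ∈ S, (a + b) ^ (2 ^ p.1) * (a + b) ^ (2 ^ p.2)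
        = (a ^ (2 ^ p.1) * a ^ (2 ^ p.2)) + (b ^ (2 ^ p.1) * b ^ (2 ^ p.2))
          + (a ^ (2 ^ p.1) * b ^ (2 ^ p.2) + a ^ (2 ^ p.2) * b ^ (2 ^ p.1)) := by
      intro p _
      rw [add_pow_char_pow, add_pow_char_pow]
      ring
    rw [Finset.sum_congr rfl e1, Finset.sum_add_distrib, Finset.sum_add_distrib]
    rw [sigma, sigma]
  -- the cross term
  have hcross : (∑ p ∈ S, (a ^ (2 ^ p.1) * b ^ (2 ^ p.2) + a ^ (2 ^ p.2) * b ^ (2 ^ p.1)))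
      = Tsum n a * Tsum n b + Tsum n (a * b) := by
    have hsplit : (∑ p ∈ S, (a ^ (2 ^ p.1) * b ^ (2 ^ p.2) + a ^ (2 ^ p.2) * b ^ (2 ^ p.1)))
        = (∑ p ∈ S, a ^ (2 ^ p.1) * b ^ (2 ^ p.2)) + ∑ p ∈ S, a ^ (2 ^ p.2) * b ^ (2 ^ p.1) :=
      Finset.sum_add_distrib
    have hswap : (∑ p ∈ S, a ^ (2 ^ p.2) * b ^ (2 ^ p.1))
        = ∑ p ∈ S', a ^ (2 ^ p.1) * b ^ (2 ^ p.2) := by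
      refine Finset.sum_nbij' (i := Prod.swap) (j := Prod.swap) ?_ ?_ ?_ ?_ ?_
      · intro p hp
        simp only [hS, hS', Finset.mem_filter, Finset.mem_product, Finset.mem_range] at hp ⊢
        exact ⟨⟨hp.1.2, hp.1.1⟩, hp.2⟩
      · intro q hq
        simp only [hS, hS', Finset.mem_filter, Finset.mem_product, Finset.mem_range] at hq ⊢
        exact ⟨⟨hq.1.2, hq.1.1⟩, hq.2⟩
      · intro p _; rfl
      · intro q _; rfl
      · intro p _; rfl
    have hdiag : (∑ p ∈ Sd, a ^ (2 ^ p.1) * b ^ (2 ^ p.2)) = Tsum n (a * b) := by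
      rw [Tsum]
      refine Finset.sum_nbij' (i := fun p => p.1) (j := fun i => (i, i)) ?_ ?_ ?_ ?_ ?_
      · intro p hp
        simp only [hSd, Finset.mem_filter, Finset.mem_product, Finset.mem_range] at hp ⊢
        exact hp.1.1
      · intro i hi
        rw [hSd, Finset.mem_filter, Finset.mem_product]
        rw [Finset.mem_range] at hi
        exact ⟨⟨Finset.mem_range.mpr hi, Finset.mem_range.mpr hi⟩, rfl⟩
      · intro p hp
        simp only [hSd, Finset.mem_filter] at hp
        ext <;> simp [hp.2]
      · intro i _; rfl
      · intro p hp
        simp only [hSd, Finset.mem_filter] at hp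
        rw [← hp.2]
        exact (mul_pow _ _ _).symm
    have hfull : Tsum n a * Tsum n b
        = (∑ p ∈ S, a ^ (2 ^ p.1) * b ^ (2 ^ p.2))
          + (∑ p ∈ S', a ^ (2 ^ p.1) * b ^ (2 ^ p.2))
          + (∑ p ∈ Sd, a ^ (2 ^ p.1) * b ^ (2 ^ p.2)) := by
      rw [Tsum, Tsum, Finset.sum_mul_sum, ← Finset.sum_product']
      set f := fun p : ℕ × ℕ => a ^ (2 ^ p.1) * b ^ (2 ^ p.2) with hf
      have h1 : Finset.range n ×ˢ Finset.range n
          = (S ∪ S') ∪ Sd := by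
        ext p
        simp only [hS, hS', hSd, Finset.mem_union, Finset.mem_filter, Finset.mem_product,
          Finset.mem_range]
        constructor
        · intro h
          rcases lt_trichotomy p.1 p.2 with hh | hh | hh
          · exact Or.inl (Or.inl ⟨h, hh⟩)
          · exact Or.inr ⟨h, hh⟩
          · exact Or.inl (Or.inr ⟨h, hh⟩)
        · rintro ((⟨h, _⟩ | ⟨h, _⟩) | ⟨h, _⟩) <;> exact h
      have hd1 : Disjoint S S' := by
        rw [Finset.disjoint_left]
        intro p hp hp'
        simp only [hS, hS', Finset.mem_filter] at hp hp'
        omega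
      have hd2 : Disjoint (S ∪ S') Sd := by
        rw [Finset.disjoint_left]
        intro p hp hp'
        simp only [hS, hS', hSd, Finset.mem_union, Finset.mem_filter] at hp hp'
        omega
      rw [h1, Finset.sum_union hd2, Finset.sum_union hd1]
    rw [hsplit, hswap]
    linear_combination (-1 : GaloisField 2 n) * hfull - hdiag - Tsum n (a * b) * htwo
  rw [hexp, hcross, hab]
  linear_combination (sigma n c x + sigma n c z) * htwo

lemma lift01_one (n : ℕ) : lift01 (1 : GaloisField 2 n) = 1 := by
  rw [lift01]; exact if_pos rfl

lemma zmod2_cases (q : ZMod 2) : q = 0 ∨ q = 1 := by revert q; decide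

lemma lift01_algebraMap (n : ℕ) (q : ZMod 2) :
    lift01 (algebraMap (ZMod 2) (GaloisField 2 n) q) = q.val := by
  rcases zmod2_cases q with rfl | rfl
  · rw [map_zero, lift01_zero]; rfl
  · rw [map_one, lift01_one]; rfl

lemma algebraMap_mem01 (n : ℕ) (q : ZMod 2) :
    algebraMap (ZMod 2) (GaloisField 2 n) q = 0 ∨ algebraMap (ZMod 2) (GaloisField 2 n) q = 1 := by
  rcases zmod2_cases q with rfl | rfl
  · exact Or.inl (map_zero _)
  · exact Or.inr (map_one _)

lemma parity_bridge (n : ℕ) {p q r w v t : GaloisField 2 n}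
    (hp : p = 0 ∨ p = 1) (hq : q = 0 ∨ q = 1) (hr : r = 0 ∨ r = 1)
    (hw : w = 0 ∨ w = 1) (hv : v = 0 ∨ v = 1) (ht : t = 0 ∨ t = 1)
    (hid : p + q + r = w * v + t) :
    (lift01 p + lift01 q + lift01 r + lift01 w * lift01 v + lift01 t) % 2 = 0 := by
  have htwo : (1 : GaloisField 2 n) + 1 = 0 := by
    have := CharP.cast_eq_zero (GaloisField 2 n) 2
    rw [show ((2:ℕ) : GaloisField 2 n) = 1 + 1 by push_cast; ring] at this
    exact this
  rcases hp with rfl | rfl <;> rcases hq with rfl | rfl <;> rcases hr with rfl | rfl <;>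
    rcases hw with rfl | rfl <;> rcases hv with rfl | rfl <;> rcases ht with rfl | rfl <;>
    simp only [lift01_zero, lift01_one, add_zero, zero_add, mul_zero, zero_mul, mul_one,
      one_mul, htwo] at hid ⊢ <;>
    first
      | rfl
      | (exact absurd hid (by simp [htwo, zero_ne_one, one_ne_zero]))

lemma hs_all (n : ℕ) (c x z : GaloisField 2 n) :
    (lift01 (sigma n c (x + z)) + lift01 (sigma n c x) + lift01 (sigma n c z)
      + (Tr n (c * x)).val * (Tr n (c * z)).val + (Tr n (c ^ 2 * x * z)).val) % 2 = 0 := by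
  rcases Nat.eq_zero_or_pos n with rfl | hn
  · -- n = 0 : sigma is an empty sum; the field is the prime field
    have hσ : ∀ w y : GaloisField 2 0, sigma 0 w y = 0 := by
      intro w y; rw [sigma]; simp
    rw [hσ, hσ, hσ, lift01_zero]
    -- algebraMap is surjective here
    have hbot : (⊥ : Subalgebra (ZMod 2) (GaloisField 2 0)) = ⊤ := by
      have hsf : Polynomial.IsSplittingField (ZMod 2) (GaloisField 2 0)
          (Polynomial.X ^ 2 ^ 0 - Polynomial.X) := by
        exact Polynomial.IsSplittingField.splittingField _
      have h0 : (Polynomial.X ^ 2 ^ 0 - Polynomial.X : Polynomial (ZMod 2)) = 0 := by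
        simp
      have := hsf.adjoin_rootSet
      rw [h0] at this
      rwa [Polynomial.rootSet_zero, Algebra.adjoin_empty] at this
    have hsurj : Function.Surjective (algebraMap (ZMod 2) (GaloisField 2 0)) := by
      intro y
      have : y ∈ (⊥ : Subalgebra (ZMod 2) (GaloisField 2 0)) := hbot ▸ trivial
      rcases Algebra.mem_bot.mp this with ⟨q, hq⟩
      exact ⟨q, hq⟩
    have hrank : Module.finrank (ZMod 2) (GaloisField 2 0) = 1 :=
      Subalgebra.bot_eq_top_iff_finrank_eq_one.mp hbot
    have hTr : ∀ q : ZMod 2, Tr 0 (algebraMap (ZMod 2) (GaloisField 2 0) q) = q := by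
      intro q
      rw [Tr, Algebra.trace_algebraMap, hrank, one_smul]
    obtain ⟨c', rfl⟩ := hsurj c
    obtain ⟨x', rfl⟩ := hsurj x
    obtain ⟨z', rfl⟩ := hsurj z
    have hAB : Tr 0 (algebraMap (ZMod 2) (GaloisField 2 0) c' * algebraMap (ZMod 2) (GaloisField 2 0) x')
        * Tr 0 (algebraMap (ZMod 2) (GaloisField 2 0) c' * algebraMap (ZMod 2) (GaloisField 2 0) z')
        = Tr 0 ((algebraMap (ZMod 2) (GaloisField 2 0) c') ^ 2
            * algebraMap (ZMod 2) (GaloisField 2 0) x' * algebraMap (ZMod 2) (GaloisField 2 0) z') := by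
      have e1 : algebraMap (ZMod 2) (GaloisField 2 0) c' * algebraMap (ZMod 2) (GaloisField 2 0) x'
          = algebraMap (ZMod 2) (GaloisField 2 0) (c' * x') := (map_mul _ _ _).symm
      have e2 : algebraMap (ZMod 2) (GaloisField 2 0) c' * algebraMap (ZMod 2) (GaloisField 2 0) z'
          = algebraMap (ZMod 2) (GaloisField 2 0) (c' * z') := (map_mul _ _ _).symm
      have e3 : (algebraMap (ZMod 2) (GaloisField 2 0) c') ^ 2
            * algebraMap (ZMod 2) (GaloisField 2 0) x' * algebraMap (ZMod 2) (GaloisField 2 0) z'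
          = algebraMap (ZMod 2) (GaloisField 2 0) (c' ^ 2 * x' * z') := by
        rw [map_mul, map_mul, map_pow]
      rw [e1, e2, e3, hTr, hTr, hTr]
      ring
    have hv : ∀ q : ZMod 2, q.val < 2 := fun q => q.val_lt
    have hmulval : ((Tr 0 (algebraMap (ZMod 2) (GaloisField 2 0) c' * algebraMap (ZMod 2) (GaloisField 2 0) x')
        * Tr 0 (algebraMap (ZMod 2) (GaloisField 2 0) c' * algebraMap (ZMod 2) (GaloisField 2 0) z')).val)
        = (Tr 0 (algebraMap (ZMod 2) (GaloisField 2 0) c' * algebraMap (ZMod 2) (GaloisField 2 0) x')).val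
          * (Tr 0 (algebraMap (ZMod 2) (GaloisField 2 0) c' * algebraMap (ZMod 2) (GaloisField 2 0) z')).val % 2 :=
      ZMod.val_mul _ _
    rw [hAB] at hmulval
    generalize hA : (Tr 0 (algebraMap (ZMod 2) (GaloisField 2 0) c' * algebraMap (ZMod 2) (GaloisField 2 0) x')).val = A at *
    generalize hB : (Tr 0 (algebraMap (ZMod 2) (GaloisField 2 0) c' * algebraMap (ZMod 2) (GaloisField 2 0) z')).val = B at *
    generalize hD : (Tr 0 ((algebraMap (ZMod 2) (GaloisField 2 0) c') ^ 2 * algebraMap (ZMod 2) (GaloisField 2 0) x' * algebraMap (ZMod 2) (GaloisField 2 0) z')).val = D at *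
    generalize hAB2 : A * B = E at *
    have hD2 : D < 2 := hD ▸ hv _
    omega
  · -- n ≥ 1
    have hTx := trace_eq n hn.ne' (c * x)
    have hTz := trace_eq n hn.ne' (c * z)
    have hTxz := trace_eq n hn.ne' (c ^ 2 * x * z)
    have hid := sigma_add n c x z
    rw [Tsum, Tsum, Tsum, ← hTx, ← hTz, ← hTxz] at hid
    have hbridge := parity_bridge n (sigma_mem n c (x + z)) (sigma_mem n c x) (sigma_mem n c z)
      (algebraMap_mem01 n (Tr n (c * x))) (algebraMap_mem01 n (Tr n (c * z)))
      (algebraMap_mem01 n (Tr n (c ^ 2 * x * z))) hid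
    rwa [lift01_algebraMap, lift01_algebraMap, lift01_algebraMap] at hbridge

lemma neg_one_parity (a b : ℕ) (h : a % 2 = b % 2) : (-1 : ℂ) ^ a = (-1 : ℂ) ^ b := by
  rw [← Nat.div_add_mod a 2, ← Nat.div_add_mod b 2, h, pow_add, pow_add, pow_mul, pow_mul]
  norm_num

lemma I_key (A B : ZMod 2) :
    (Complex.I) ^ ((A + B).val) * ((-1 : ℂ) ^ A.val * Complex.I ^ A.val)
      = (-1 : ℂ) ^ (A.val * B.val) * Complex.I ^ B.val := by
  rcases zmod2_cases A with rfl | rfl <;> rcases zmod2_cases B with rfl | rfl <;>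
    norm_num [show ((0:ZMod 2)+0).val = 0 from rfl, show ((0:ZMod 2)+1).val = 1 from rfl,
      show ((1:ZMod 2)+0).val = 1 from rfl, show ((1:ZMod 2)+1).val = 0 from rfl, show (2:ZMod 2).val = 0 from rfl,
      show (0:ZMod 2).val = 0 from rfl, show (1:ZMod 2).val = 1 from rfl]

lemma key_term (G1 G2 U1 Uz A B D : ZMod 2) (s1 s2 s12 : ℕ)
    (hs : (s12 + s1 + s2 + A.val * B.val + D.val) % 2 = 0) :
    ((-1 : ℂ) ^ (G2.val + s12 + (U1 + Uz).val) * Complex.I ^ ((A + B).val)) *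
      ((-1 : ℂ) ^ (G1.val + s1 + U1.val) * (-Complex.I) ^ A.val)
    = (-1 : ℂ) ^ (Uz.val + s2) * Complex.I ^ B.val
        * (-1 : ℂ) ^ (G1.val + G2.val + D.val) := by
  have hUval : (U1 + Uz).val = (U1.val + Uz.val) % 2 := ZMod.val_add _ _
  have hnegI : (-Complex.I) ^ A.val = (-1 : ℂ) ^ A.val * Complex.I ^ A.val := by
    rw [neg_pow]
  calc ((-1 : ℂ) ^ (G2.val + s12 + (U1 + Uz).val) * Complex.I ^ ((A + B).val)) *
      ((-1 : ℂ) ^ (G1.val + s1 + U1.val) * (-Complex.I) ^ A.val)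
      = ((-1 : ℂ) ^ ((G2.val + s12 + (U1 + Uz).val) + (G1.val + s1 + U1.val)))
        * (Complex.I ^ ((A + B).val) * ((-1 : ℂ) ^ A.val * Complex.I ^ A.val)) := by
        rw [hnegI, pow_add]; ring
    _ = ((-1 : ℂ) ^ ((G2.val + s12 + (U1 + Uz).val) + (G1.val + s1 + U1.val)))
        * ((-1 : ℂ) ^ (A.val * B.val) * Complex.I ^ B.val) := by rw [I_key]
    _ = (-1 : ℂ) ^ ((G2.val + s12 + (U1 + Uz).val) + (G1.val + s1 + U1.val) + A.val * B.val)
        * Complex.I ^ B.val := by rw [pow_add]; ring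
    _ = (-1 : ℂ) ^ ((Uz.val + s2) + (G1.val + G2.val + D.val)) * Complex.I ^ B.val := by
        rw [neg_one_parity ((G2.val + s12 + (U1 + Uz).val) + (G1.val + s1 + U1.val) + A.val * B.val)
          ((Uz.val + s2) + (G1.val + G2.val + D.val)) (by
            rw [hUval]
            generalize A.val * B.val = E at *
            omega)]
    _ = (-1 : ℂ) ^ (Uz.val + s2) * Complex.I ^ B.val * (-1 : ℂ) ^ (G1.val + G2.val + D.val) := by
        rw [pow_add]; ring

lemma Tr_add (n : ℕ) (a b : GaloisField 2 n) : Tr n (a + b) = Tr n a + Tr n b :=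
  map_add (Algebra.trace (ZMod 2) (GaloisField 2 n)) a b


/-- `V_g^c(u)·conj(V_g^c(u)) = Σ_z (−1)^{Tr(uz)+σ(c,z)} i^{Tr(cz)} · Σ_x (−1)^{g(x)+g(x+z)+Tr(c²xz)}`. -/
theorem V_mul_conj (n : ℕ) (g : GaloisField 2 n → ZMod 2) (c u : GaloisField 2 n) :
    V n g c u * starRingEnd ℂ (V n g c u) =
      ∑ z : GaloisField 2 n,
        (-1 : ℂ) ^ ((Tr n (u * z)).val + lift01 (sigma n c z)) *
          Complex.I ^ (Tr n (c * z)).val *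
          (∑ x : GaloisField 2 n,
            (-1 : ℂ) ^ ((g x).val + (g (x + z)).val + (Tr n (c ^ 2 * x * z)).val)) := by
  classical
  have hVconj : starRingEnd ℂ (V n g c u)
      = ∑ x : GaloisField 2 n,
          (-1 : ℂ) ^ ((g x).val + lift01 (sigma n c x) + (Tr n (u * x)).val) *
            (-Complex.I) ^ (Tr n (c * x)).val := by
    rw [V, map_sum]
    refine Finset.sum_congr rfl fun x _ => ?_
    rw [map_mul, map_pow, map_pow]
    simp [Complex.conj_I]
  rw [hVconj, V, Finset.sum_mul_sum, Finset.sum_comm]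
  have hre : ∀ x : GaloisField 2 n,
      (∑ y : GaloisField 2 n,
        ((-1 : ℂ) ^ ((g y).val + lift01 (sigma n c y) + (Tr n (u * y)).val) *
            Complex.I ^ (Tr n (c * y)).val) *
          ((-1 : ℂ) ^ ((g x).val + lift01 (sigma n c x) + (Tr n (u * x)).val) *
            (-Complex.I) ^ (Tr n (c * x)).val))
      = ∑ z : GaloisField 2 n,
        ((-1 : ℂ) ^ ((g (x + z)).val + lift01 (sigma n c (x + z)) + (Tr n (u * (x + z))).val) *
            Complex.I ^ (Tr n (c * (x + z))).val) *
          ((-1 : ℂ) ^ ((g x).val + lift01 (sigma n c x) + (Tr n (u * x)).val) *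
            (-Complex.I) ^ (Tr n (c * x)).val) := by
    intro x
    exact (Fintype.sum_equiv (Equiv.addLeft x) _ _ (fun z => rfl)).symm
  rw [Finset.sum_congr rfl fun x _ => hre x, Finset.sum_comm]
  refine Finset.sum_congr rfl fun z _ => ?_
  rw [Finset.mul_sum]
  refine Finset.sum_congr rfl fun x _ => ?_
  have h1 : u * (x + z) = u * x + u * z := by ring
  have h2 : c * (x + z) = c * x + c * z := by ring
  rw [h1, h2, Tr_add, Tr_add]
  have hk := key_term (g x) (g (x + z)) (Tr n (u * x)) (Tr n (u * z)) (Tr n (c * x))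
    (Tr n (c * z)) (Tr n (c ^ 2 * x * z)) (lift01 (sigma n c x)) (lift01 (sigma n c z))
    (lift01 (sigma n c (x + z))) (hs_all n c x z)
  calc ((-1 : ℂ) ^ ((g (x + z)).val + lift01 (sigma n c (x + z)) + (Tr n (u * x) + Tr n (u * z)).val) *
          Complex.I ^ ((Tr n (c * x) + Tr n (c * z)).val)) *
        ((-1 : ℂ) ^ ((g x).val + lift01 (sigma n c x) + (Tr n (u * x)).val) *
          (-Complex.I) ^ (Tr n (c * x)).val)
      = (-1 : ℂ) ^ ((Tr n (u * z)).val + lift01 (sigma n c z)) * Complex.I ^ (Tr n (c * z)).val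
        * (-1 : ℂ) ^ ((g x).val + (g (x + z)).val + (Tr n (c ^ 2 * x * z)).val) := hk
    _ = (-1 : ℂ) ^ ((Tr n (u * z)).val + lift01 (sigma n c z)) * Complex.I ^ (Tr n (c * z)).val
        * (-1 : ℂ) ^ ((g x).val + (g (x + z)).val + (Tr n (c ^ 2 * x * z)).val) := rfl
end
end
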